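/- For any prime p, any integer n with n not congruent to 0 modulo p-1, and any integer r ≥ 0, the sum of k^n over all integers k with 1 ≤ k ≤ p^r - 1 and p not dividing k is congruent to 0 modulo p^r. -/

import Mathlib

theorem powersum_mod (p : ℕ) (hp : p.Prime) (n : ℤ) (hn : ¬ ((p : ℤ) - 1) ∣ n) (r : ℕ) :
    ∑ k ∈ (Finset.Icc 1 (p ^ r - 1)).filter (fun k => ¬ p ∣ k),
      (if 0 ≤ n then ((k : ZMod (p ^ r))) ^ n.toNat
        else ((k : ZMod (p ^ r))⁻¹) ^ (-n).toNat) = 0 := by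
  rcases Nat.eq_zero_or_pos r with hr | hr
  · subst hr; simp; exact Finset.sum_empty
  have hpr1 : 1 < p ^ r := Nat.one_lt_pow (by omega) hp.one_lt
  haveI : Fact p.Prime := ⟨hp⟩
  haveI : NeZero (p ^ r) := ⟨by positivity⟩
  haveI : Fact (1 < p ^ r) := ⟨hpr1⟩
  set R := ZMod (p ^ r)
  -- coprimality facts
  have hcop : ∀ k : ℕ, ¬ p ∣ k → Nat.Coprime k (p ^ r) := by
    intro k hk
    exact (Nat.Coprime.pow_right r ((hp.coprime_iff_not_dvd.mpr hk).symm)).symm.symm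
  -- rewrite the sum as a sum over units
  have key : ∑ k ∈ (Finset.Icc 1 (p ^ r - 1)).filter (fun k => ¬ p ∣ k),
      (if 0 ≤ n then ((k : R)) ^ n.toNat else ((k : R)⁻¹) ^ (-n).toNat)
      = ∑ u : Rˣ, ((u ^ n : Rˣ) : R) := by
    apply Finset.sum_bij (fun k hk =>
      ZMod.unitOfCoprime k (hcop k (Finset.mem_filter.mp hk).2))
    · intro a ha; exact Finset.mem_univ _
    · intro a ha b hb h
      have h' : ((a : R)) = ((b : R)) := by
        have := congrArg (fun u : Rˣ => (u : R)) h
        simpa [ZMod.coe_unitOfCoprime] using this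
      have ha' := Finset.mem_Icc.mp (Finset.mem_filter.mp ha).1
      have hb' := Finset.mem_Icc.mp (Finset.mem_filter.mp hb).1
      have ha2 : a < p ^ r := by omega
      have hb2 : b < p ^ r := by omega
      have := congrArg ZMod.val h'
      rwa [ZMod.val_natCast_of_lt ha2, ZMod.val_natCast_of_lt hb2] at this
    · intro u _
      refine ⟨(u : R).val, ?_, ?_⟩
      · have hvlt : (u : R).val < p ^ r := ZMod.val_lt _
        have hvne : (u : R).val ≠ 0 := by
          intro h0
          have : (u : R) = 0 := by
            have := ZMod.natCast_rightInverse (n := p ^ r) (u : R)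
            rw [← this, h0]; simp
          exact u.ne_zero this
        have hpd : ¬ p ∣ (u : R).val := by
          intro hd
          have hcu : Nat.Coprime ((u : R).val) (p ^ r) := ZMod.val_coe_unit_coprime u
          have h2 : p ∣ Nat.gcd ((u : R).val) (p ^ r) :=
            Nat.dvd_gcd hd (dvd_pow_self p (by omega))
          rw [hcu] at h2
          have := Nat.le_of_dvd one_pos h2
          have := hp.two_le
          omega
        exact Finset.mem_filter.mpr ⟨Finset.mem_Icc.mpr ⟨by omega, by omega⟩, hpd⟩
      · apply Units.ext
        simp [ZMod.coe_unitOfCoprime, ZMod.natCast_rightInverse (n := p ^ r) (u : R)]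
    · intro k hk
      have hkcop := hcop k (Finset.mem_filter.mp hk).2
      set u : Rˣ := ZMod.unitOfCoprime k hkcop with hu
      have hcoe : (u : R) = (k : R) := ZMod.coe_unitOfCoprime k hkcop
      by_cases h0 : 0 ≤ n
      · rw [if_pos h0]
        have : u ^ n = u ^ (n.toNat) := by
          rw [← zpow_natCast, Int.toNat_of_nonneg h0]
        rw [this, Units.val_pow_eq_pow_val, hcoe]
      · rw [if_neg h0]
        have hneg : n = -((-n).toNat : ℤ) := by omega
        have : u ^ n = (u⁻¹) ^ ((-n).toNat) := by
          conv_lhs => rw [hneg]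
          rw [zpow_neg, ← inv_zpow, zpow_natCast]
        rw [this, Units.val_pow_eq_pow_val, ← ZMod.inv_coe_unit, hcoe]
  rw [key]
  -- now the character sum argument
  set S : R := ∑ u : Rˣ, ((u ^ n : Rˣ) : R) with hS
  -- generator of (ZMod p)ˣ
  obtain ⟨a, ha⟩ := IsCyclic.exists_generator (α := (ZMod p)ˣ)
  have horda : orderOf a = p - 1 := by
    rw [orderOf_eq_card_of_forall_mem_zpowers ha, Nat.card_eq_fintype_card, ZMod.card_units]
  have hdvd : p ∣ p ^ r := dvd_pow_self p (by omega)
  obtain ⟨g, hg⟩ := ZMod.unitsMap_surjective hdvd a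
  -- a ^ n ≠ 1
  have han : a ^ n ≠ 1 := by
    intro h
    have := orderOf_dvd_iff_zpow_eq_one.mpr h
    rw [horda] at this
    apply hn
    have hcast : ((p - 1 : ℕ) : ℤ) = (p : ℤ) - 1 := by
      have := hp.one_lt; omega
    rwa [hcast] at this
  -- (g^n - 1 : R) is a unit
  have hunit : IsUnit (((g ^ n : Rˣ) : R) - 1) := by
    set x : R := ((g ^ n : Rˣ) : R) - 1 with hx
    have hcastx : ((x.val : ZMod p)) ≠ 0 := by
      have hφ : (ZMod.castHom hdvd (ZMod p)) x = ((a ^ n : (ZMod p)ˣ) : ZMod p) - 1 := by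
        rw [hx, map_sub, map_one]
        have : (ZMod.castHom hdvd (ZMod p)) ((g ^ n : Rˣ) : R)
            = ((Units.map (ZMod.castHom hdvd (ZMod p)) (g ^ n) : (ZMod p)ˣ) : ZMod p) := rfl
        rw [this, map_zpow]
        have : Units.map (ZMod.castHom hdvd (ZMod p)) g = a := hg
        rw [this]
      have hval : (ZMod.castHom hdvd (ZMod p)) x = ((x.val : ZMod p)) := by
        rw [ZMod.castHom_apply, ← ZMod.natCast_val]
      rw [hval] at hφ
      rw [hφ]
      intro h
      apply han
      apply Units.ext
      have : ((a ^ n : (ZMod p)ˣ) : ZMod p) = 1 := by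
        have := sub_eq_zero.mp h
        simpa using this
      simpa using this
    have hnd : ¬ p ∣ x.val := by
      intro hd
      apply hcastx
      exact (ZMod.natCast_eq_zero_iff _ _).mpr hd
    have hx2 : ((x.val : ℕ) : R) = x := ZMod.natCast_rightInverse x
    rw [← hx2, ZMod.isUnit_iff_coprime]
    exact ((hp.coprime_iff_not_dvd.mpr hnd).symm.pow_right r)
  -- reindexing: (g^n) * S = S
  have hre : ((g ^ n : Rˣ) : R) * S = S := by
    rw [hS, Finset.mul_sum]
    rw [← Equiv.sum_comp (Equiv.mulLeft g) (fun u : Rˣ => ((u ^ n : Rˣ) : R))]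
    apply Finset.sum_congr rfl
    intro u _
    rw [Equiv.coe_mulLeft, mul_zpow]
    push_cast
    ring
  have : (((g ^ n : Rˣ) : R) - 1) * S = 0 := by
    rw [sub_mul, one_mul, hre, sub_self]
  have := hunit.mul_right_eq_zero.mp this
  exact this
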